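/- arXiv:1805.10340 — 3 statements merged into one kernel-verified Lean document; each statement's English description precedes it below -/
import Mathlib

section
/- Let n = 2 and q = −1, so T_2(−1) is the Sweedler Hopf algebra. Let A = k[u]/(u² − 1) be equipped with the T_2(−1)-module-algebra structure (σ, δ) determined by σ(u) = −u and δ(u) = γ·1_A for some nonzero γ ∈ k. Then for every λ ∈ k there exists an extension (τ, δ') of (σ, δ) to a D(T_2(−1))-module-algebra structure on A with τ(u) = −u and δ'(u) = λ·1_A; and conversely every extension (τ, δ') of (σ, δ) to a D(T_2(−1))-module-algebra structure on A satisfies τ(u) = −u and δ'(u) = λ·1_A for some λ ∈ k. -/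
/-- The data of an extension of a `T_n(q)`-module-algebra structure `(σ, δ)` on `A`
to a `D(T_n(q))`-module-algebra structure, given by the actions `τ` of the grouplike `G`
and `δ'` of the `(1,G)`-skew primitive `X` of the Drinfel'd double. -/
def IsDTaftExtension {k A : Type*} [Field k] [CommRing A] [Algebra k A]
    (n : ℕ) (q : k) (σ : A ≃ₐ[k] A) (δ : A →ₗ[k] A)
    (τ : A ≃ₐ[k] A) (δ' : A →ₗ[k] A) : Prop :=
  τ ^ n = 1 ∧ δ' 1 = 0 ∧
  (∀ a b : A, δ' (a * b) = a * δ' b + δ' a * τ b) ∧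
  δ' ^ n = 0 ∧
  τ.toLinearMap ∘ₗ δ' = q • (δ' ∘ₗ τ.toLinearMap) ∧
  σ * τ = τ * σ ∧
  δ ∘ₗ τ.toLinearMap = q • (τ.toLinearMap ∘ₗ δ) ∧
  σ.toLinearMap ∘ₗ δ' = q⁻¹ • (δ' ∘ₗ σ.toLinearMap) ∧
  δ ∘ₗ δ' - δ' ∘ₗ δ = τ.toLinearMap - σ.toLinearMap

/-- For the Sweedler algebra `T_2(-1)` acting on `A = k[u]/(u² - 1)` by `σ(u) = -u`,
`δ(u) = γ·1` (`γ ≠ 0`): for every `μ ∈ k` there is an extension to a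
`D(T_2(-1))`-module-algebra structure with `τ(u) = -u`, `δ'(u) = μ·1`; and every
extension is of this form. -/
theorem stmt_6 (k : Type*) [Field k] [IsAlgClosed k] [CharZero k]
    (γ : k) (hγ : γ ≠ 0)
    (A : Type*) [CommRing A] [Algebra k A]
    (u : A) (b : Module.Basis (Fin 2) k A) (hb : ∀ i : Fin 2, b i = u ^ (i : ℕ))
    (hu : u ^ 2 = 1)
    (σ : A ≃ₐ[k] A) (δ : A →ₗ[k] A)
    (hσn : σ ^ 2 = 1) (hδ1 : δ 1 = 0)
    (hleib : ∀ a c : A, δ (a * c) = σ a * δ c + δ a * c)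
    (hδn : δ ^ 2 = 0)
    (hcomm : σ.toLinearMap ∘ₗ δ = (-1 : k) • (δ ∘ₗ σ.toLinearMap))
    (hσu : σ u = -u) (hδu : δ u = γ • (1 : A)) :
    (∀ μ : k, ∃ (τ : A ≃ₐ[k] A) (δ' : A →ₗ[k] A),
        IsDTaftExtension 2 (-1 : k) σ δ τ δ' ∧
        τ u = -u ∧ δ' u = μ • (1 : A)) ∧
    (∀ (τ : A ≃ₐ[k] A) (δ' : A →ₗ[k] A),
        IsDTaftExtension 2 (-1 : k) σ δ τ δ' →
        τ u = -u ∧ ∃ μ : k, δ' u = μ • (1 : A)) := by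
  have hb0 : b 0 = (1 : A) := by rw [hb]; norm_num
  have hb1 : b 1 = u := by rw [hb]; norm_num
  have hr1 : b.repr (1 : A) = Finsupp.single 0 1 := by rw [← hb0]; exact b.repr_self 0
  have hru : b.repr u = Finsupp.single 1 1 := by rw [← hb1]; exact b.repr_self 1
  have hdec : ∀ a : A, a = b.repr a 0 • (1 : A) + b.repr a 1 • u := by
    intro a
    have h := b.sum_repr a
    rw [Fin.sum_univ_two, hb0, hb1] at h
    exact h.symm
  have huu : u * u = 1 := by rw [← pow_two, hu]
  -- extraction of coefficients
  have key : ∀ x y z w : k, x • (1 : A) + y • u = z • (1 : A) + w • u → x = z ∧ y = w := by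
    intro x y z w h
    have h0 := congrArg (fun v => b.repr v 0) h
    have h1 := congrArg (fun v => b.repr v 1) h
    simp only [map_add, map_smul, hr1, hru, Finsupp.coe_add, Finsupp.coe_smul, Pi.add_apply,
      Pi.smul_apply, Finsupp.single_apply, smul_eq_mul] at h0 h1
    norm_num at h0 h1
    exact ⟨h0, h1⟩
  -- pointwise versions of hypotheses
  have hcomm' : ∀ a : A, σ (δ a) = -δ (σ a) := by
    intro a
    have := LinearMap.congr_fun hcomm a
    simpa using this
  constructor
  · -- existence
    intro μ
    refine ⟨σ, (μ / γ) • δ, ?_, hσu, ?_⟩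
    · have hδ'1 : ((μ / γ) • δ) (1 : A) = 0 := by simp [hδ1]
      have hδ'u : ((μ / γ) • δ) u = μ • (1 : A) := by
        simp [hδu, smul_smul, div_mul_cancel₀ _ hγ]
      refine ⟨hσn, hδ'1, ?_, ?_, ?_, rfl, ?_, ?_, ?_⟩
      · -- twisted Leibniz for δ'
        intro a c
        obtain ⟨x, y, rfl⟩ : ∃ x y : k, a = x • (1 : A) + y • u := ⟨_, _, hdec a⟩
        obtain ⟨z, w, rfl⟩ : ∃ z w : k, c = z • (1 : A) + w • u := ⟨_, _, hdec c⟩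
        simp only [LinearMap.smul_apply, map_add, map_smul, hδ1, hδu, map_one, hσu,
          smul_zero, add_zero, zero_add, mul_add, add_mul, smul_mul_assoc, mul_smul_comm,
          huu, mul_one, one_mul, smul_smul, smul_neg, mul_neg]
        module
      · -- δ'^2 = 0
        ext a
        have h2 := LinearMap.congr_fun hδn a
        simp only [pow_two, Module.End.mul_apply, LinearMap.zero_apply] at h2 ⊢
        simp [h2]
      · -- τ ∘ δ' = q • δ' ∘ τ
        ext a
        simp [hcomm' a]
      · -- δ ∘ τ = q • τ ∘ δ
        ext a
        have := hcomm' a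
        have h2 : δ (σ a) = -σ (δ a) := by rw [this]; ring
        simp [h2]
      · -- σ ∘ δ' = q⁻¹ • δ' ∘ σ
        ext a
        rw [show ((-1 : k))⁻¹ = -1 by norm_num]
        simp [hcomm' a]
      · -- commutator relation
        ext a
        simp
    · simp [hδu, smul_smul, div_mul_cancel₀ _ hγ]
  · -- uniqueness of the form
    intro τ δ' hext
    obtain ⟨hτn, hδ'1, hleib', hδ'n, h5, h6, h7, h8, h9⟩ := hext
    -- determine τ u
    set x := b.repr (τ u) 0 with hx
    set y := b.repr (τ u) 1 with hy
    have htau : τ u = x • (1 : A) + y • u := hdec (τ u)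
    -- from δ ∘ τ = -τ ∘ δ at u
    have h7u := LinearMap.congr_fun h7 u
    simp only [LinearMap.comp_apply, LinearMap.smul_apply, AlgEquiv.toLinearMap_apply] at h7u
    have e1 : δ (τ u) = (y * γ) • (1 : A) + (0 : k) • u := by
      rw [htau, map_add, map_smul, map_smul, hδ1, hδu]
      module
    have e2 : (-1 : k) • τ (δ u) = (-γ) • (1 : A) + (0 : k) • u := by
      rw [hδu, map_smul, map_one]
      module
    have h7u' := e1.symm.trans (h7u.trans e2)
    have hyγ : y * γ = -γ := (key _ _ _ _ h7u').1
    have hym : y = -1 := by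
      have h2 : (y + 1) * γ = 0 := by linear_combination hyγ
      rcases mul_eq_zero.mp h2 with h' | h'
      · linear_combination h'
      · exact absurd h' hγ
    -- from multiplicativity of τ
    have hsq : τ u * τ u = 1 := by rw [← map_mul, huu, map_one]
    rw [htau] at hsq
    have hsq2 : (x • (1 : A) + y • u) * (x • (1 : A) + y • u)
        = (x * x + y * y) • (1 : A) + (x * y + y * x) • u := by
      simp only [mul_add, add_mul, smul_mul_assoc, mul_smul_comm, huu, mul_one, one_mul,
        smul_smul]
      module
    have hsq' : (x * x + y * y) • (1 : A) + (x * y + y * x) • u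
        = (1 : k) • (1 : A) + (0 : k) • u := by
      rw [← hsq2, hsq]
      module
    obtain ⟨h1eq, h2eq⟩ := key _ _ _ _ hsq'
    have hx0 : x = 0 := by
      rw [hym] at h2eq
      have h2 : (2 : k) * x = 0 := by linear_combination -h2eq
      exact (mul_eq_zero.mp h2).resolve_left two_ne_zero
    have hτu : τ u = -u := by
      rw [htau, hx0, hym]
      module
    refine ⟨hτu, ?_⟩
    -- determine δ' u
    set c := b.repr (δ' u) 0 with hc
    set d := b.repr (δ' u) 1 with hd
    have hδ'dec : δ' u = c • (1 : A) + d • u := hdec (δ' u)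
    have h8u := LinearMap.congr_fun h8 u
    simp only [LinearMap.comp_apply, LinearMap.smul_apply, AlgEquiv.toLinearMap_apply] at h8u
    have f1 : σ (δ' u) = c • (1 : A) + (-d) • u := by
      rw [hδ'dec, map_add, map_smul, map_smul, map_one, hσu]
      module
    have f2 : ((-1 : k))⁻¹ • δ' (σ u) = c • (1 : A) + d • u := by
      rw [show ((-1 : k))⁻¹ = -1 by norm_num, hσu, map_neg, hδ'dec]
      module
    have h8u' := f1.symm.trans (h8u.trans f2)
    have hd0 : d = 0 := by
      have hneg : -d = d := (key _ _ _ _ h8u').2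
      have h2 : (2 : k) * d = 0 := by linear_combination -hneg
      exact (mul_eq_zero.mp h2).resolve_left two_ne_zero
    exact ⟨c, by rw [hδ'dec, hd0]; module⟩
end

section
/- Let n be a positive integer, ζ ∈ k a primitive n-th root of unity, and m, t positive divisors of n. Let A = k[u]/(u^n − 1), let σ be the k-algebra automorphism of A with σ(u) = ζ·u, and let δ: A → A be a k-linear map with δ(1_A) = 0, δ(ab) = σ^m(a)δ(b) + δ(a)b for all a, b ∈ A, σ∘δ = ζ^t·(δ∘σ), and δ(u) ≠ 0. Then there exists a nonzero γ ∈ k such that for all integers p, s > 0: δ(u^p) = γ·(p)_{ζ^m}·u^{p+t} and δ^s(u^p) = γ^s·(∏_{i=0}^{s−1} (p + it)_{ζ^m})·u^{p+st}, where exponents of u are taken modulo n. In particular, for N = n/gcd(n, mt), one has δ^N(u^p) = 0 if and only if n/m divides p + it for some 0 ≤ i < N. -/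
/-- The `q`-symbol `(s)_w = 1 + w + w² + ⋯ + w^(s-1)`. -/
def qSym {k : Type*} [Field k] (w : k) (s : ℕ) : k := ∑ i ∈ Finset.range s, w ^ i

/-- Technical lemma on actions of `H̃_n(ζ,m,t)` on `A = k[u]/(uⁿ - 1)`:
if `σ(u) = ζ·u` and `δ(u) ≠ 0`, then there is a nonzero `γ` with
`δ(u^p) = γ·(p)_{ζ^m}·u^(p+t)` and
`δ^s(u^p) = γ^s·(∏_{i<s} (p+it)_{ζ^m})·u^(p+st)`; in particular, for
`N = n/gcd(n,mt)`, `δ^N(u^p) = 0` iff `n/m ∣ p + it` for some `0 ≤ i < N`. -/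
theorem stmt_7 (k : Type*) [Field k] [IsAlgClosed k] [CharZero k]
    (n : ℕ) (hn : 0 < n) (ζ : k) (hζ : IsPrimitiveRoot ζ n)
    (m t : ℕ) (hm0 : 0 < m) (ht0 : 0 < t) (hmn : m ∣ n) (htn : t ∣ n)
    (A : Type*) [CommRing A] [Algebra k A]
    (u : A) (b : Module.Basis (Fin n) k A) (hb : ∀ i : Fin n, b i = u ^ (i : ℕ))
    (hu : u ^ n = 1)
    (σ : A ≃ₐ[k] A) (δ : A →ₗ[k] A)
    (hσu : σ u = ζ • u)
    (hδ1 : δ 1 = 0)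
    (hleib : ∀ a c : A, δ (a * c) = (σ ^ m) a * δ c + δ a * c)
    (hcomm : σ.toLinearMap ∘ₗ δ = ζ ^ t • (δ ∘ₗ σ.toLinearMap))
    (hδu : δ u ≠ 0) :
    ∃ γ : k, γ ≠ 0 ∧
      (∀ p : ℕ, 0 < p → δ (u ^ p) = (γ * qSym (ζ ^ m) p) • u ^ (p + t)) ∧
      (∀ p s : ℕ, 0 < p → 0 < s →
        (δ ^ s) (u ^ p) =
          (γ ^ s * ∏ i ∈ Finset.range s, qSym (ζ ^ m) (p + i * t)) • u ^ (p + s * t)) ∧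
      (∀ p : ℕ, 0 < p →
        ((δ ^ (n / Nat.gcd n (m * t))) (u ^ p) = 0 ↔
          ∃ i < n / Nat.gcd n (m * t), (n / m) ∣ (p + i * t))) := by
  classical
  have hnontriv : Nontrivial A := nontrivial_of_ne (b ⟨0, hn⟩) 0 (b.ne_zero _)
  have huu : IsUnit u := by
    refine IsUnit.of_mul_eq_one (a := u) (u ^ (n - 1)) ?_
    rw [← pow_succ', Nat.sub_add_cancel hn]
    exact hu
  have hune : ∀ a : ℕ, u ^ a ≠ 0 := fun a => (huu.pow a).ne_zero
  have hupow : ∀ a : ℕ, u ^ a = u ^ (a % n) := by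
    intro a
    conv_lhs => rw [← Nat.div_add_mod a n]
    rw [pow_add, pow_mul, hu, one_pow, one_mul]
  have hσpow : ∀ a : ℕ, σ (u ^ a) = ζ ^ a • u ^ a := by
    intro a; rw [map_pow, hσu, smul_pow]
  have hσm : ∀ j : ℕ, (σ ^ j) u = ζ ^ j • u := by
    intro j; induction j with
    | zero => simp
    | succ j ih =>
      rw [pow_succ', AlgEquiv.mul_apply, ih, map_smul, hσu, smul_smul, pow_succ', mul_comm]
  -- eigenvector property of δ u
  have hσδu : σ (δ u) = ζ ^ (1 + t) • δ u := by
    have h1 := LinearMap.congr_fun hcomm u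
    simp only [LinearMap.comp_apply, LinearMap.smul_apply, AlgEquiv.toLinearMap_apply,
      hσu, map_smul] at h1
    rw [h1, smul_smul, pow_add, pow_one, mul_comm]
  set c : Fin n → k := fun i => b.repr (δ u) i with hc
  have hv : δ u = ∑ i, c i • b i := (b.sum_repr (δ u)).symm
  have key : ∀ i : Fin n, ζ ^ (i : ℕ) * c i = ζ ^ (1 + t) * c i := by
    intro i
    have e1 : σ (δ u) = ∑ j : Fin n, (ζ ^ (j : ℕ) * c j) • b j := by
      rw [hv, map_sum]
      refine Finset.sum_congr rfl fun j _ => ?_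
      rw [map_smul, hb, hσpow, ← hb, smul_smul, mul_comm]
    have e2 : σ (δ u) = ∑ j : Fin n, (ζ ^ (1 + t) * c j) • b j := by
      rw [hσδu, hv, Finset.smul_sum]
      exact Finset.sum_congr rfl fun j _ => (smul_smul _ _ _)
    have h3 := e1.symm.trans e2
    have h4 := congrFun (b.repr_sum_self fun j => ζ ^ (j : ℕ) * c j) i
    have h5 := congrFun (b.repr_sum_self fun j => ζ ^ (1 + t) * c j) i
    rw [← h4, ← h5, h3]
  set r : Fin n := ⟨(1 + t) % n, Nat.mod_lt _ hn⟩ with hr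
  have hczero : ∀ i : Fin n, i ≠ r → c i = 0 := by
    intro i hi
    by_contra hci
    have h4 : ζ ^ (i : ℕ) = ζ ^ (1 + t) := mul_right_cancel₀ hci (key i)
    have h5 : ζ ^ ((1 + t) % n) = ζ ^ (1 + t) := by
      conv_rhs => rw [← Nat.div_add_mod (1 + t) n]
      rw [pow_add, pow_mul, hζ.pow_eq_one, one_pow, one_mul]
    have h6 := hζ.pow_inj i.isLt (Nat.mod_lt _ hn) (h4.trans h5.symm)
    exact hi (Fin.ext h6)
  have hvr : δ u = c r • u ^ (1 + t) := by
    rw [hv, Finset.sum_eq_single r (fun i _ hi => by rw [hczero i hi, zero_smul])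
      (fun h => absurd (Finset.mem_univ r) h), hb, hr, ← hupow]
  set γ := c r with hγdef
  have hγ : γ ≠ 0 := by intro h; rw [h, zero_smul] at hvr; exact hδu hvr
  -- the first-order formula, for all p (including 0)
  have hP : ∀ p : ℕ, δ (u ^ p) = (γ * qSym (ζ ^ m) p) • u ^ (p + t) := by
    intro p; induction p with
    | zero => simp [qSym, hδ1]
    | succ p ih =>
      have h := hleib u (u ^ p)
      rw [← pow_succ'] at h
      rw [h, ih, hσm m, hvr]
      rw [smul_mul_smul_comm, smul_mul_assoc, ← pow_succ', ← pow_add]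
      have e1 : p + t + 1 = p + 1 + t := by omega
      have e2 : 1 + t + p = p + 1 + t := by omega
      rw [e1, e2, ← add_smul]
      congr 1
      show ζ ^ m * (γ * qSym (ζ ^ m) p) + γ = γ * qSym (ζ ^ m) (p + 1)
      have : qSym (ζ ^ m) (p + 1) = ζ ^ m * qSym (ζ ^ m) p + 1 := geom_sum_succ
      rw [this]; ring
  -- iterated formula, for all p s
  have hPs : ∀ p s : ℕ, (δ ^ s) (u ^ p) =
      (γ ^ s * ∏ i ∈ Finset.range s, qSym (ζ ^ m) (p + i * t)) • u ^ (p + s * t) := by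
    intro p s; induction s with
    | zero => simp
    | succ s ih =>
      rw [pow_succ', Module.End.mul_apply, ih, map_smul, hP (p + s * t),
        smul_smul, Finset.prod_range_succ]
      have e1 : p + s * t + t = p + (s + 1) * t := by ring
      rw [e1]
      congr 1
      ring
  -- qSym vanishing criterion
  have hmne : m ≠ n := by
    intro hmeq
    have h0 := hP n
    rw [hu, hδ1] at h0
    have h1 : γ * qSym (ζ ^ m) n = 0 := by
      rcases smul_eq_zero.mp h0.symm with h | h
      · exact h
      · exact absurd h (hune _)
    have h2 : qSym (ζ ^ m) n = (n : k) := by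
      subst hmeq
      simp [qSym, hζ.pow_eq_one]
    rw [h2, mul_eq_zero] at h1
    rcases h1 with h | h
    · exact hγ h
    · exact (Nat.cast_ne_zero.mpr hn.ne') h
  have hmlt : m < n := lt_of_le_of_ne (Nat.le_of_dvd hn hmn) hmne
  set d := n / m with hd
  have hnd : n = m * d := (Nat.mul_div_cancel' hmn).symm
  have hd1 : 1 < d := by
    rcases Nat.lt_or_ge d 2 with h | h
    · interval_cases d <;> omega
    · exact h
  have hζm : IsPrimitiveRoot (ζ ^ m) d := hζ.pow hn hnd
  have hw1 : ζ ^ m ≠ 1 := by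
    intro h
    have h2 : d ∣ 1 := (hζm.pow_eq_one_iff_dvd 1).mp (by rw [pow_one]; exact h)
    have := Nat.le_of_dvd one_pos h2
    omega
  have hqzero : ∀ s : ℕ, (qSym (ζ ^ m) s = 0 ↔ d ∣ s) := by
    intro s
    have hg : qSym (ζ ^ m) s = ((ζ ^ m) ^ s - 1) / (ζ ^ m - 1) := geom_sum_eq hw1 s
    rw [hg, div_eq_zero_iff]
    constructor
    · rintro (h | h)
      · exact (hζm.pow_eq_one_iff_dvd s).mp (sub_eq_zero.mp h)
      · exact absurd (sub_eq_zero.mp h) hw1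
    · intro h
      left
      rw [(hζm.pow_eq_one_iff_dvd s).mpr h, sub_self]
  refine ⟨γ, hγ, fun p _ => hP p, fun p s _ _ => hPs p s, ?_⟩
  intro p hp
  set N := n / Nat.gcd n (m * t)
  rw [hPs p N, smul_eq_zero]
  simp only [hune (p + N * t), or_false]
  rw [mul_eq_zero]
  have hγN : γ ^ N ≠ 0 := pow_ne_zero _ hγ
  simp only [hγN, false_or]
  rw [Finset.prod_eq_zero_iff]
  constructor
  · rintro ⟨i, hi, hqi⟩
    exact ⟨i, Finset.mem_range.mp hi, (hqzero _).mp hqi⟩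
  · rintro ⟨i, hi, hdvd⟩
    exact ⟨i, Finset.mem_range.mpr hi, (hqzero _).mpr hdvd⟩
end

section
/- Let n ≥ 3 be odd and let q ∈ k be a primitive n-th root of unity. Let A be an n-dimensional k-algebra with no nonzero nilpotent elements, equipped with a u_q(sl₂)-module-algebra structure (κ, e, f) such that f ≠ 0 or e ≠ 0. Then there exist u ∈ A and nonzero scalars β, γ, δ ∈ k such that: A is generated as a k-algebra by u, u^n = β·1_A, κ(u) = q²·u, f(u) = γ·1_A, e(u) = δ·u², and γδ = −q. Moreover, u is unique up to a scalar multiple. -/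
open Finset


/-- In a reduced ring idempotents are central. -/
theorem MS.idem_central {A : Type*} [Ring A] [IsReduced A] {a : A} (ha : a * a = a) (b : A) :
    a * b = b * a := by
  have key : ∀ x : A, x * a = a * (x * a) := by
    intro x
    set y := x * a - a * (x * a) with hy
    have hya : y * a = y := by
      simp only [hy, sub_mul, mul_assoc, ha]
    have hy2 : y * y = 0 := by
      calc y * y = y * (x * a) - (y * a) * (x * a) := by
            rw [hy]; rw [mul_sub, mul_assoc]
        _ = 0 := by rw [hya, sub_self]
    have : y = 0 := IsNilpotent.eq_zero ⟨2, by rw [pow_two, hy2]⟩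
    rw [hy] at this
    exact sub_eq_zero.mp this
  have key2 : ∀ x : A, a * x = (a * x) * a := by
    intro x
    set z := a * x - (a * x) * a with hz
    have haz : a * z = z := by
      simp only [hz, mul_sub, ← mul_assoc, ha]
    have hz2 : z * z = 0 := by
      calc z * z = (a * x) * z - ((a * x) * a) * z := by rw [hz, sub_mul]
        _ = (a * x) * z - (a * x) * (a * z) := by rw [mul_assoc (a*x) a z]
        _ = 0 := by rw [haz, sub_self]
    have : z = 0 := IsNilpotent.eq_zero ⟨2, by rw [pow_two, hz2]⟩
    rw [hz] at this
    exact sub_eq_zero.mp this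
  calc a * b = (a * b) * a := key2 b
    _ = a * (b * a) := by rw [mul_assoc]
    _ = b * a := (key b).symm


/-- Every character of `X → k` is evaluation at a point. -/
theorem MS.char_eval {k : Type*} [Field k] {X : Type*} [Fintype X]
    (ψ : (X → k) →ₐ[k] k) : ∃ x : X, ∀ g : X → k, ψ g = g x := by
  classical
  have hsum1 : (∑ x : X, Pi.single x (1 : k)) = 1 := by
    funext y
    simp [Finset.sum_apply, Pi.single_apply]
  have h1 : ∑ x : X, ψ (Pi.single x 1) = 1 := by
    rw [← map_sum, hsum1, map_one]
  have hex : ∃ x : X, ψ (Pi.single x 1) ≠ 0 := by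
    by_contra h
    push_neg at h
    rw [Finset.sum_eq_zero (fun x _ => h x)] at h1
    exact zero_ne_one h1
  obtain ⟨x, hx⟩ := hex
  refine ⟨x, fun g => ?_⟩
  have key : g * Pi.single x 1 = algebraMap k (X → k) (g x) * Pi.single x 1 := by
    funext y
    by_cases hy : x = y
    · subst hy; simp
    · simp [Pi.single_apply, Ne.symm hy]
  have h2 := congrArg ψ key
  rw [map_mul, map_mul, AlgHom.commutes] at h2
  rw [mul_right_cancel₀ hx h2, Algebra.algebraMap_self_apply]

universe uB

/-- A finite-dimensional commutative reduced algebra over an algebraically closed field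
is a finite product of copies of the base field. -/
theorem MS.struct {k : Type*} [Field k] [IsAlgClosed k]
    (B : Type uB) [CommRing B] [Algebra k B] [IsReduced B] [FiniteDimensional k B] :
    ∃ (X : Type uB) (_ : Finite X), Nonempty (B ≃ₐ[k] (X → k)) := by
  haveI : IsArtinianRing B := isArtinian_of_tower k inferInstance
  haveI hfin : Finite {I : Ideal B // I.IsMaximal} :=
    (IsArtinianRing.setOfPred_isMaximal_finite B).to_subtype
  refine ⟨{I : Ideal B // I.IsMaximal}, inferInstance, ?_⟩
  haveI hmax : ∀ I : {I : Ideal B // I.IsMaximal}, I.1.IsMaximal := fun I => I.2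
  let Φ₀ : B →ₐ[k] (∀ I : {I : Ideal B // I.IsMaximal}, B ⧸ I.1) :=
    Pi.algHom k _ (fun I => Ideal.Quotient.mkₐ k I.1)
  have hinj : Function.Injective Φ₀ := by
    rw [injective_iff_map_eq_zero]
    intro x hx
    have hxmem : ∀ I : {I : Ideal B // I.IsMaximal}, x ∈ I.1 := fun I => by
      have := congr_fun hx I
      simpa [Φ₀, Ideal.Quotient.eq_zero_iff_mem] using this
    have hnil : IsNilpotent x := by
      rw [nilpotent_iff_mem_prime]
      intro J hJ
      exact hxmem ⟨J, IsArtinianRing.isMaximal_of_isPrime J⟩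
    exact hnil.eq_zero
  have hpair : Pairwise (Function.onFun IsCoprime fun I : {I : Ideal B // I.IsMaximal} => I.1) := by
    intro I J hIJ
    exact Ideal.isCoprime_iff_sup_eq.mpr <|
      I.2.coprime_of_ne J.2 (by rwa [Ne, Subtype.coe_inj])
  have hsurj : Function.Surjective Φ₀ := by
    intro y
    obtain ⟨z, hz⟩ := Ideal.quotientInfToPiQuotient_surj hpair y
    obtain ⟨x, rfl⟩ := Ideal.Quotient.mk_surjective z
    refine ⟨x, ?_⟩
    funext I
    have := congr_fun hz I
    rwa [Ideal.quotientInfToPiQuotient_mk'] at this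
  let Φ₁ : B ≃ₐ[k] (∀ I : {I : Ideal B // I.IsMaximal}, B ⧸ I.1) :=
    AlgEquiv.ofBijective Φ₀ ⟨hinj, hsurj⟩
  letI : ∀ I : {I : Ideal B // I.IsMaximal}, Field (B ⧸ I.1) :=
    fun I => Ideal.Quotient.field I.1
  have hresidue : ∀ I : {I : Ideal B // I.IsMaximal}, Nonempty ((B ⧸ I.1) ≃ₐ[k] k) := by
    intro I
    haveI : Module.Finite k (B ⧸ I.1) :=
      Module.Finite.of_surjective (Ideal.Quotient.mkₐ k I.1).toLinearMap
        Ideal.Quotient.mk_surjective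
    haveI : Algebra.IsIntegral k (B ⧸ I.1) := Algebra.IsIntegral.of_finite k _
    have hbij : Function.Bijective (algebraMap k (B ⧸ I.1)) :=
      ⟨(algebraMap k (B ⧸ I.1)).injective,
        IsAlgClosed.algebraMap_bijective_of_isIntegral.2⟩
    exact ⟨(AlgEquiv.ofBijective (Algebra.ofId k (B ⧸ I.1)) hbij).symm⟩
  exact ⟨Φ₁.trans (AlgEquiv.piCongrRight (fun I => (hresidue I).some))⟩

theorem MS.comm {k : Type*} [Field k] [IsAlgClosed k]
    {A : Type*} [Ring A] [Algebra k A] [IsReduced A] [FiniteDimensional k A]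
    (a b : A) : a * b = b * a := by
  classical
  set B := Algebra.adjoin k ({a} : Set A) with hB
  letI : CommRing B := Algebra.adjoinCommRingOfComm k
    (by rintro x hx y hy
        rw [Set.mem_singleton_iff] at hx hy
        subst hx; subst hy; rfl)
  haveI : IsReduced B := by
    constructor
    rintro x ⟨m, hm⟩
    have hcoe : (x : A) ^ m = 0 := by
      have := congrArg (Subtype.val) hm
      push_cast at this
      exact_mod_cast this
    exact Subtype.ext (IsNilpotent.eq_zero ⟨m, hcoe⟩)
  haveI : FiniteDimensional k B := FiniteDimensional.of_injective
    (B.val.toLinearMap) Subtype.val_injective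
  obtain ⟨X, hfinX, ⟨Φ⟩⟩ := MS.struct (k := k) B
  letI : Fintype X := Fintype.ofFinite X
  have haB : a ∈ B := Algebra.self_mem_adjoin_singleton k a
  set g : X → k := Φ ⟨a, haB⟩ with hg
  set ε : X → B := fun x => Φ.symm (Pi.single x 1) with hε
  have hsingle : ∀ x : X, (Pi.single x 1 : X → k) * Pi.single x 1 = Pi.single x 1 := by
    intro x; funext y; by_cases hy : x = y
    · subst hy; simp
    · simp [Pi.single_apply, Ne.symm hy]
  have hidem : ∀ x : X, ((ε x : A)) * (ε x : A) = (ε x : A) := by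
    intro x
    have : ε x * ε x = ε x := by
      rw [hε]; dsimp only
      rw [← map_mul, hsingle]
    exact_mod_cast congrArg Subtype.val this
  have hdecomp : (⟨a, haB⟩ : B) = ∑ x : X, g x • ε x := by
    have h2 : Φ ⟨a, haB⟩ = ∑ x : X, g x • (Pi.single x 1 : X → k) := by
      funext y
      rw [Finset.sum_apply, Finset.sum_eq_single y]
      · simp [g]
      · intro x _ hxy; simp [Pi.single_apply, hxy]
      · intro h; exact absurd (Finset.mem_univ y) h
    calc (⟨a, haB⟩ : B) = Φ.symm (Φ ⟨a, haB⟩) := (Φ.symm_apply_apply _).symm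
      _ = ∑ x : X, g x • ε x := by rw [h2, map_sum]; simp [hε]
  have hA : a = ∑ x : X, g x • (ε x : A) := by
    have := congrArg (B.val) hdecomp
    simpa [map_sum] using this
  calc a * b = (∑ x : X, g x • (ε x : A)) * b := by rw [← hA]
    _ = ∑ x : X, g x • ((ε x : A) * b) := by rw [Finset.sum_mul]; simp [smul_mul_assoc]
    _ = ∑ x : X, g x • (b * (ε x : A)) := by
        refine Finset.sum_congr rfl fun x _ => ?_
        rw [MS.idem_central (hidem x) b]
    _ = b * (∑ x : X, g x • (ε x : A)) := by rw [Finset.mul_sum]; simp [mul_smul_comm]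
    _ = b * a := by rw [← hA]

theorem MS.main (k : Type*) [Field k] [IsAlgClosed k] [CharZero k]
    (n : ℕ) (hn : 3 ≤ n) (hodd : Odd n)
    (q : k) (hq : IsPrimitiveRoot q n)
    (A : Type*) [CommRing A] [Algebra k A] [IsReduced A]
    [FiniteDimensional k A] (hdim : Module.finrank k A = n)
    (κ : A ≃ₐ[k] A) (e f : A →ₗ[k] A)
    (hκn : κ ^ n = 1)
    (he1 : e 1 = 0) (hf1 : f 1 = 0)
    (heab : ∀ a c : A, e (a * c) = κ a * e c + e a * c)
    (hfab : ∀ a c : A, f (a * c) = a * f c + f a * κ⁻¹ c)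
    (hκe : κ.toLinearMap ∘ₗ e = q ^ 2 • (e ∘ₗ κ.toLinearMap))
    (hκf : κ.toLinearMap ∘ₗ f = (q⁻¹) ^ 2 • (f ∘ₗ κ.toLinearMap))
    (hef : (q - q⁻¹) • (e ∘ₗ f - f ∘ₗ e) =
      κ.toLinearMap - (κ⁻¹ : A ≃ₐ[k] A).toLinearMap)
    (hne : f ≠ 0 ∨ e ≠ 0) :
    ∃ (u : A) (β γ δ : k), β ≠ 0 ∧ γ ≠ 0 ∧ δ ≠ 0 ∧
      Algebra.adjoin k {u} = ⊤ ∧ u ^ n = β • (1 : A) ∧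
      κ u = q ^ 2 • u ∧ f u = γ • (1 : A) ∧ e u = δ • u ^ 2 ∧ γ * δ = -q ∧
      (∀ (u' : A) (β' γ' δ' : k), β' ≠ 0 → γ' ≠ 0 → δ' ≠ 0 →
        Algebra.adjoin k {u'} = ⊤ → u' ^ n = β' • (1 : A) →
        κ u' = q ^ 2 • u' → f u' = γ' • (1 : A) → e u' = δ' • u' ^ 2 →
        γ' * δ' = -q → ∃ c : k, u' = c • u) := by
  classical
  have hn0 : n ≠ 0 := by omega
  have npos : 0 < n := by omega
  have hq0 : q ≠ 0 := hq.ne_zero hn0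
  have hcop : Nat.Coprime 2 n := hodd.coprime_two_left
  have hq2 : IsPrimitiveRoot (q ^ 2) n := hq.pow_of_coprime 2 hcop
  set r : k := (q ^ 2)⁻¹ with hrdef
  have hr : IsPrimitiveRoot r n := hq2.inv
  have hrn : r ^ n = 1 := hr.pow_eq_one
  have hq20 : q ^ 2 ≠ 0 := pow_ne_zero 2 hq0
  have hr0 : r ≠ 0 := inv_ne_zero hq20
  have hq2r : q ^ 2 * r = 1 := mul_inv_cancel₀ hq20
  have hrr : (q⁻¹) ^ 2 = r := by rw [hrdef, inv_pow]
  -- structure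
  obtain ⟨X, hfinX, ⟨Φ⟩⟩ := MS.struct (k := k) A
  letI : Fintype X := Fintype.ofFinite X
  have hcard : Fintype.card X = n := by
    have h1 := Φ.toLinearEquiv.finrank_eq
    rw [hdim, Module.finrank_pi] at h1
    exact h1.symm
  set φ : X → (A →ₐ[k] k) := fun x => (Pi.evalAlgHom k (fun _ => k) x).comp Φ.toAlgHom
    with hφdef
  have hφ : ∀ (x : X) (a : A), φ x a = Φ a x := fun _ _ => rfl
  set ε : X → A := fun x => Φ.symm (Pi.single x 1) with hεdef
  have hφε : ∀ x y : X, φ x (ε y) = if x = y then 1 else 0 := by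
    intro x y
    rw [hφ, hεdef]
    simp [Pi.single_apply]
  have hext : ∀ a b : A, (∀ x, φ x a = φ x b) → a = b := by
    intro a b h
    exact Φ.injective (funext fun x => h x)
  have hsum : ∀ a : A, a = ∑ x : X, φ x a • ε x := by
    intro a
    have h2 : Φ a = ∑ x : X, φ x a • (Pi.single x 1 : X → k) := by
      funext y
      rw [Finset.sum_apply, Finset.sum_eq_single y]
      · simp [hφ]
      · intro x _ hxy; simp [Pi.single_apply, hxy]
      · intro h; exact absurd (Finset.mem_univ y) h
    calc a = Φ.symm (Φ a) := (Φ.symm_apply_apply a).symm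
      _ = ∑ x : X, φ x a • ε x := by rw [h2, map_sum]; simp [hεdef]
  have hεidem : ∀ x : X, ε x * ε x = ε x := by
    intro x
    rw [hεdef]; dsimp only
    rw [← map_mul]
    congr 1
    funext y
    by_cases hy : x = y
    · subst hy; simp
    · simp [Pi.single_apply, Ne.symm hy]
  have hεinj : Function.Injective ε := by
    intro x y h
    have := congrArg (φ x) h
    rw [hφε, hφε, if_pos rfl] at this
    by_contra hxy
    rw [if_neg hxy] at this
    exact one_ne_zero this
  -- the permutation σ
  have hchar : ∀ x : X, ∃ y : X, ∀ a : A, φ x (κ a) = φ y a := by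
    intro x
    obtain ⟨y, hy⟩ := MS.char_eval ((φ x).comp (κ.toAlgHom.comp Φ.symm.toAlgHom))
    refine ⟨y, fun a => ?_⟩
    have h1 := hy (Φ a)
    simp only [AlgHom.comp_apply, AlgEquiv.coe_algHom, Φ.symm_apply_apply] at h1
    rw [h1, hφ]
  choose τ hτ using hchar
  have hτinj : Function.Injective τ := by
    intro x1 x2 h12
    have hb : ∀ b : A, φ x1 b = φ x2 b := by
      intro b
      have e1 := hτ x1 (κ.symm b)
      have e2 := hτ x2 (κ.symm b)
      rw [κ.apply_symm_apply] at e1 e2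
      rw [e1, e2, h12]
    have := hb (ε x1)
    rw [hφε, hφε, if_pos rfl] at this
    by_contra hxy
    rw [if_neg (fun hc : x2 = x1 => hxy hc.symm)] at this
    exact one_ne_zero this
  set σ : Equiv.Perm X :=
    (Equiv.ofBijective τ ((Fintype.bijective_iff_injective_and_card τ).mpr
      ⟨hτinj, rfl⟩)).symm with hσdef
  have hφκ : ∀ (x : X) (a : A), φ x (κ a) = φ (σ.symm x) a := fun x a => hτ x a
  have hκε : ∀ x : X, κ (ε x) = ε (σ x) := by
    intro x
    apply hext; intro y
    rw [hφκ, hφε, hφε, if_congr (Equiv.symm_apply_eq σ) rfl rfl]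
  have hκinv : ∀ a : A, (κ⁻¹ : A ≃ₐ[k] A) a = κ.symm a := fun _ => rfl
  have hκsymε : ∀ x : X, κ.symm (ε x) = ε (σ.symm x) := by
    intro x
    apply κ.injective
    rw [κ.apply_symm_apply, hκε, Equiv.apply_symm_apply]
  have hinvσ : ∀ y : X, σ⁻¹ y = σ.symm y := fun _ => rfl
  have hκpow : ∀ (d : ℕ) (x : X), (κ ^ d) (ε x) = ε ((σ ^ d) x) := by
    intro d
    induction d with
    | zero => intro x; simp
    | succ d ih =>
      intro x
      rw [pow_succ, AlgEquiv.mul_apply, hκε, ih (σ x), pow_succ, Equiv.Perm.mul_apply]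
  have hφκpow : ∀ (d : ℕ) (x : X) (a : A), φ x ((κ ^ d) a) = φ ((σ⁻¹ ^ d) x) a := by
    intro d
    induction d with
    | zero => intro x a; simp
    | succ d ih =>
      intro x a
      rw [pow_succ, AlgEquiv.mul_apply, ih, hφκ, pow_succ', Equiv.Perm.mul_apply, hinvσ]
  have hσn : σ ^ n = 1 := by
    ext x
    have h1 := hκpow n x
    rw [hκn] at h1
    have h2 : ε x = ε ((σ ^ n) x) := by simpa using h1
    have := hεinj h2
    simpa using this.symm
  have hσmod : ∀ i : ℕ, σ ^ i = σ ^ (i % n) := by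
    intro i
    conv_lhs => rw [← Nat.mod_add_div i n, pow_add, pow_mul, hσn, one_pow, mul_one]
  have hrmod : ∀ i : ℕ, r ^ i = r ^ (i % n) := by
    intro i
    conv_lhs => rw [← Nat.mod_add_div i n, pow_add, pow_mul, hrn, one_pow, mul_one]
  -- pointwise skew-commutation relations and their iterates
  have hκe1 : ∀ a : A, κ (e a) = q ^ 2 • e (κ a) := by
    intro a
    have h1 := LinearMap.congr_fun hκe a
    simpa using h1
  have hκf1 : ∀ a : A, κ (f a) = (q⁻¹) ^ 2 • f (κ a) := by
    intro a
    have h1 := LinearMap.congr_fun hκf a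
    simpa using h1
  have hκed : ∀ (d : ℕ) (a : A), (κ ^ d) (e a) = (q ^ 2) ^ d • e ((κ ^ d) a) := by
    intro d
    induction d with
    | zero => intro a; simp
    | succ d ih =>
      intro a
      rw [pow_succ, AlgEquiv.mul_apply, hκe1, map_smul, ih, smul_smul,
        AlgEquiv.mul_apply, ← pow_succ']
  have hκfd : ∀ (d : ℕ) (a : A), (κ ^ d) (f a) = ((q⁻¹) ^ 2) ^ d • f ((κ ^ d) a) := by
    intro d
    induction d with
    | zero => intro a; simp
    | succ d ih =>
      intro a
      rw [pow_succ, AlgEquiv.mul_apply, hκf1, map_smul, ih, smul_smul,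
        AlgEquiv.mul_apply, ← pow_succ']
  -- key rigidity: a point on a short orbit kills both skew derivations
  have P2 : ∀ (x : X) (d : ℕ), 0 < d → d < n → (σ ^ d) x = x →
      e (ε x) = 0 ∧ f (ε x) = 0 := by
    intro x d hd0 hdn hfix
    have hqd : (q ^ 2) ^ d ≠ 1 := by
      rw [← pow_mul]
      intro hcon
      have hdvd : n ∣ 2 * d := (hq.pow_eq_one_iff_dvd _).mp hcon
      have hnd : n ∣ d := hcop.symm.dvd_of_dvd_mul_left hdvd
      exact absurd (Nat.le_of_dvd hd0 hnd) (not_le.mpr hdn)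
    have hfixσx : (σ ^ d) (σ x) = σ x := by
      have h1 : (σ ^ (d + 1)) x = σ ((σ ^ d) x) := by
        rw [pow_succ', Equiv.Perm.mul_apply]
      have h2 : (σ ^ (d + 1)) x = (σ ^ d) (σ x) := by
        rw [pow_succ, Equiv.Perm.mul_apply]
      rw [← h2, h1, hfix]
    have hfixinv : ∀ y : X, (σ ^ d) y = y → (σ⁻¹ ^ d) y = y := by
      intro y hy
      calc (σ⁻¹ ^ d) y = (σ⁻¹ ^ d) ((σ ^ d) y) := by rw [hy]
        _ = ((σ⁻¹ ^ d) * (σ ^ d)) y := (Equiv.Perm.mul_apply _ _ _).symm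
        _ = y := by rw [inv_pow, inv_mul_cancel, Equiv.Perm.one_apply]
    have hfixsymx : (σ ^ d) (σ.symm x) = σ.symm x := by
      have hcomm : σ ^ d * σ⁻¹ = σ⁻¹ * σ ^ d := ((Commute.refl σ).pow_left d).inv_right
      have h1 : (σ ^ d) (σ.symm x) = (σ ^ d * σ⁻¹) x := by
        rw [Equiv.Perm.mul_apply, hinvσ]
      rw [h1, hcomm, Equiv.Perm.mul_apply, hfix, hinvσ]
    constructor
    · -- e (ε x) = 0
      set v := e (ε x) with hv
      have hL : v = ε (σ x) * v + v * ε x := by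
        have h1 := heab (ε x) (ε x)
        rw [hεidem x, hκε] at h1
        exact h1
      have hsupp : ∀ y, y ≠ x → y ≠ σ x → φ y v = 0 := by
        intro y hy1 hy2
        have h1 := congrArg (φ y) hL
        rw [map_add, map_mul, map_mul, hφε, hφε, if_neg hy2, if_neg hy1,
          zero_mul, mul_zero, add_zero] at h1
        exact h1
      have hfixv : (κ ^ d) v = v := by
        apply hext; intro y
        rw [hφκpow]
        by_cases hy1 : y = x
        · rw [hy1, hfixinv x hfix]
        · by_cases hy2 : y = σ x
          · rw [hy2, hfixinv (σ x) hfixσx]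
          · rw [hsupp y hy1 hy2, hsupp ((σ⁻¹ ^ d) y) ?_ ?_]
            · intro hcon
              apply hy1
              have := congrArg (σ ^ d) hcon
              rw [← Equiv.Perm.mul_apply, inv_pow, mul_inv_cancel, Equiv.Perm.one_apply,
                hfix] at this
              exact this
            · intro hcon
              apply hy2
              have := congrArg (σ ^ d) hcon
              rw [← Equiv.Perm.mul_apply, inv_pow, mul_inv_cancel, Equiv.Perm.one_apply,
                hfixσx] at this
              exact this
      have heig : (κ ^ d) v = (q ^ 2) ^ d • v := by
        rw [hv, hκed d (ε x), hκpow d x, hfix]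
      have hz : ((q ^ 2) ^ d - 1) • v = 0 := by
        rw [sub_smul, one_smul, ← heig, hfixv, sub_self]
      rcases smul_eq_zero.mp hz with h | h
      · exact absurd (by rwa [sub_eq_zero] at h) hqd
      · exact h
    · -- f (ε x) = 0
      set v := f (ε x) with hv
      have hL : v = ε x * v + v * ε (σ.symm x) := by
        have h1 := hfab (ε x) (ε x)
        rw [hεidem x, hκinv, hκsymε] at h1
        exact h1
      have hsupp : ∀ y, y ≠ x → y ≠ σ.symm x → φ y v = 0 := by
        intro y hy1 hy2
        have h1 := congrArg (φ y) hL
        rw [map_add, map_mul, map_mul, hφε, hφε, if_neg hy1, if_neg hy2,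
          zero_mul, mul_zero, add_zero] at h1
        exact h1
      have hfixv : (κ ^ d) v = v := by
        apply hext; intro y
        rw [hφκpow]
        by_cases hy1 : y = x
        · rw [hy1, hfixinv x hfix]
        · by_cases hy2 : y = σ.symm x
          · rw [hy2, hfixinv (σ.symm x) hfixsymx]
          · rw [hsupp y hy1 hy2, hsupp ((σ⁻¹ ^ d) y) ?_ ?_]
            · intro hcon
              apply hy1
              have := congrArg (σ ^ d) hcon
              rw [← Equiv.Perm.mul_apply, inv_pow, mul_inv_cancel, Equiv.Perm.one_apply,
                hfix] at this
              exact this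
            · intro hcon
              apply hy2
              have := congrArg (σ ^ d) hcon
              rw [← Equiv.Perm.mul_apply, inv_pow, mul_inv_cancel, Equiv.Perm.one_apply,
                hfixsymx] at this
              exact this
      have heig : (κ ^ d) v = ((q⁻¹) ^ 2) ^ d • v := by
        rw [hv, hκfd d (ε x), hκpow d x, hfix]
      have hqdinv : ((q⁻¹) ^ 2) ^ d ≠ 1 := by
        have hconv : ((q⁻¹) ^ 2) ^ d = ((q ^ 2) ^ d)⁻¹ := by rw [inv_pow, inv_pow]
        intro hcon
        rw [hconv, inv_eq_one] at hcon
        exact hqd hcon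
      have hz : (((q⁻¹) ^ 2) ^ d - 1) • v = 0 := by
        rw [sub_smul, one_smul, ← heig, hfixv, sub_self]
      rcases smul_eq_zero.mp hz with h | h
      · exact absurd (by rwa [sub_eq_zero] at h) hqdinv
      · exact h
  -- a point whose orbit is everything
  have hP1 : ∃ x : X, e (ε x) ≠ 0 ∨ f (ε x) ≠ 0 := by
    by_contra h
    push_neg at h
    have he0 : e = 0 := by
      ext a
      rw [hsum a, map_sum]
      simp only [map_smul, LinearMap.zero_apply]
      refine Finset.sum_eq_zero fun x _ => ?_
      rw [(h x).1, smul_zero]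
    have hf0 : f = 0 := by
      ext a
      rw [hsum a, map_sum]
      simp only [map_smul, LinearMap.zero_apply]
      refine Finset.sum_eq_zero fun x _ => ?_
      rw [(h x).2, smul_zero]
    rcases hne with h' | h'
    · exact h' hf0
    · exact h' he0
  obtain ⟨x₀, hx₀⟩ := hP1
  have hper : ∀ d : ℕ, 0 < d → d < n → (σ ^ d) x₀ ≠ x₀ := by
    intro d h1 h2 hcon
    obtain ⟨hee, hff⟩ := P2 x₀ d h1 h2 hcon
    rcases hx₀ with h' | h'
    · exact h' hee
    · exact h' hff
  have hginj : ∀ i j : ℕ, i < n → j < n → (σ ^ i) x₀ = (σ ^ j) x₀ → i = j := by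
    have haux : ∀ i j : ℕ, i < j → j < n → (σ ^ i) x₀ = (σ ^ j) x₀ → False := by
      intro i j hij hj hcon
      have h1 : (σ ^ j) x₀ = (σ ^ i) ((σ ^ (j - i)) x₀) := by
        rw [← Equiv.Perm.mul_apply, ← pow_add]
        congr 2
        omega
      rw [h1] at hcon
      have h2 : x₀ = (σ ^ (j - i)) x₀ := (σ ^ i).injective hcon
      exact hper (j - i) (by omega) (by omega) h2.symm
    intro i j hi hj hij
    rcases lt_trichotomy i j with h | h | h
    · exact absurd (haux i j h hj hij) not_false
    · exact h
    · exact absurd (haux j i h hi hij.symm) not_false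
  have hgsurj : ∀ y : X, ∃ i : ℕ, i < n ∧ (σ ^ i) x₀ = y := by
    have himg : Finset.image (fun i => (σ ^ i) x₀) (Finset.range n) = Finset.univ := by
      apply Finset.eq_univ_of_card
      rw [Finset.card_image_of_injOn, Finset.card_range, hcard]
      intro i hi j hj hij
      exact hginj i j (Finset.mem_range.mp hi) (Finset.mem_range.mp hj) hij
    intro y
    have : y ∈ Finset.image (fun i => (σ ^ i) x₀) (Finset.range n) := by
      rw [himg]; exact Finset.mem_univ y
    obtain ⟨i, hi, hiy⟩ := Finset.mem_image.mp this
    exact ⟨i, Finset.mem_range.mp hi, hiy⟩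
  -- the generator u
  set u : A := ∑ i ∈ Finset.range n, r ^ i • ε ((σ ^ i) x₀) with hudef
  have hu : ∀ i : ℕ, φ ((σ ^ i) x₀) u = r ^ i := by
    have hbase : ∀ j : ℕ, j < n → φ ((σ ^ j) x₀) u = r ^ j := by
      intro j hj
      rw [hudef, map_sum]
      rw [Finset.sum_eq_single j]
      · rw [map_smul, hφε, if_pos rfl, smul_eq_mul, mul_one]
      · intro i hi hij
        rw [map_smul, hφε, if_neg, smul_eq_mul, mul_zero]
        intro hcon
        exact hij (hginj i j (Finset.mem_range.mp hi) hj hcon.symm)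
      · intro hcon
        exact absurd (Finset.mem_range.mpr hj) hcon
    intro i
    calc φ ((σ ^ i) x₀) u = φ ((σ ^ (i % n)) x₀) u := by rw [← hσmod i]
      _ = r ^ (i % n) := hbase _ (Nat.mod_lt i npos)
      _ = r ^ i := (hrmod i).symm
  have hu0 : φ x₀ u = 1 := by
    have h1 := hu 0
    simpa using h1
  have hscal : ∀ c₁ c₂ : k, c₁ • u = c₂ • u → c₁ = c₂ := by
    intro c₁ c₂ h
    have h1 := congrArg (φ x₀) h
    rw [map_smul, map_smul, hu0, smul_eq_mul, smul_eq_mul, mul_one, mul_one] at h1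
    exact h1
  have hrn1 : r ^ (n - 1) = q ^ 2 := by
    have h1 : r ^ (n - 1) * r = 1 := by
      rw [← pow_succ]
      have : n - 1 + 1 = n := by omega
      rw [this, hrn]
    exact mul_right_cancel₀ hr0 (h1.trans hq2r.symm)
  have hsymm_pt : ∀ i : ℕ, σ.symm ((σ ^ i) x₀) = (σ ^ (i + (n - 1))) x₀ := by
    intro i
    rw [Equiv.symm_apply_eq]
    have h1 : σ ((σ ^ (i + (n - 1))) x₀) = (σ ^ (i + (n - 1) + 1)) x₀ := by
      rw [pow_succ', Equiv.Perm.mul_apply]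
    rw [h1]
    have h2 : i + (n - 1) + 1 = i + n := by omega
    rw [h2, hσmod (i + n), Nat.add_mod_right, ← hσmod i]
  have hκu : κ u = q ^ 2 • u := by
    apply hext; intro y
    obtain ⟨i, hi, rfl⟩ := hgsurj y
    rw [hφκ, map_smul, hsymm_pt, hu, hu, smul_eq_mul, pow_add, hrn1, mul_comm]
  have hκsymu : κ.symm u = r • u := by
    apply κ.injective
    rw [κ.apply_symm_apply, map_smul, hκu, smul_smul, hrdef, inv_mul_cancel₀ hq20, one_smul]
  -- eigenvector lemma
  have EIG : ∀ (m : ℕ) (w : A), κ w = (q ^ 2) ^ m • w → w = φ x₀ w • u ^ m := by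
    intro m w hw
    have hstep : ∀ i : ℕ, φ ((σ ^ i) x₀) w = φ x₀ w * r ^ (m * i) := by
      intro i
      induction i with
      | zero => simp
      | succ i ih =>
        have h1 : φ ((σ ^ (i + 1)) x₀) (κ w) = φ ((σ ^ i) x₀) w := by
          rw [hφκ]
          congr 2
          rw [Equiv.symm_apply_eq, pow_succ', Equiv.Perm.mul_apply]
        have h2 : φ ((σ ^ (i + 1)) x₀) (κ w) = (q ^ 2) ^ m * φ ((σ ^ (i + 1)) x₀) w := by
          rw [hw, map_smul, smul_eq_mul]
        have hcanc : r ^ m * (q ^ 2) ^ m = 1 := by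
          rw [← mul_pow, mul_comm, hq2r, one_pow]
        have h3 : φ ((σ ^ (i + 1)) x₀) w = r ^ m * φ ((σ ^ i) x₀) w := by
          rw [← h1, h2, ← mul_assoc, hcanc, one_mul]
        rw [h3, ih]
        ring
    apply hext; intro y
    obtain ⟨i, hi, rfl⟩ := hgsurj y
    rw [hstep i, map_smul, map_pow, hu i, smul_eq_mul, ← pow_mul, mul_comm m i]
  -- eigen-expansions of f u and e u
  have hκinvu : (κ⁻¹ : A ≃ₐ[k] A) u = r • u := by rw [hκinv, hκsymu]
  have hrq2 : r * q ^ 2 = 1 := by rw [mul_comm]; exact hq2r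
  have hκfu : κ (f u) = (q ^ 2) ^ 0 • f u := by
    rw [pow_zero, one_smul, hκf1, hκu, map_smul, smul_smul, hrr, hrq2, one_smul]
  set γ : k := φ x₀ (f u) with hγdef
  set δ : k := φ x₀ (e u) with hδdef
  have hfu : f u = γ • (1 : A) := by
    have h1 := EIG 0 (f u) hκfu
    rwa [pow_zero] at h1
  have hκeu : κ (e u) = (q ^ 2) ^ 2 • e u := by
    rw [hκe1, hκu, map_smul, smul_smul, ← pow_two]
  have heu : e u = δ • u ^ 2 := EIG 2 (e u) hκeu
  -- the commutator relation evaluated at u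
  have hefu0 : e (f u) = 0 := by rw [hfu, map_smul, he1, smul_zero]
  have hfeu : f (e u) = (δ * γ + δ * (γ * r)) • u := by
    have h1 : f (e u) = δ • (u * (γ • 1) + (γ • 1) * (r • u)) := by
      rw [heu, map_smul, sq, hfab u u, hfu, hκinv u, hκsymu]
    rw [h1, mul_smul_comm, mul_one, smul_mul_assoc, one_mul, smul_smul, smul_add,
      smul_smul, smul_smul, ← add_smul]
  have hefu := LinearMap.congr_fun hef u
  simp only [LinearMap.smul_apply, LinearMap.sub_apply, LinearMap.comp_apply,
    AlgEquiv.toLinearMap_apply] at hefu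
  rw [hefu0, hfeu, hκu, hκinvu, zero_sub, smul_neg, smul_smul, ← sub_smul,
    ← neg_smul] at hefu
  have heq := hscal _ _ hefu
  -- scalar arithmetic
  have hq4 : q ^ 4 ≠ 1 := by
    intro hcon
    have h1 : n ∣ 4 := (hq.pow_eq_one_iff_dvd 4).mp hcon
    have h2 : Nat.Coprime n 4 := by
      have h3 := Nat.Coprime.mul_right hcop.symm hcop.symm
      norm_num at h3
      exact h3
    have := Nat.Coprime.eq_one_of_dvd h2 h1
    omega
  have hkey : (δ * γ + q) * (q ^ 4 - 1) = 0 := by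
    have hkey2 : (δ * γ + q) * (q ^ 4 - 1) * q ^ 2 = 0 := by
      have h := heq
      rw [hrdef] at h
      field_simp at h
      linear_combination (-q ^ 2) * h
    rcases mul_eq_zero.mp hkey2 with h | h
    · exact h
    · exact absurd h (pow_ne_zero 2 hq0)
  have hδγ : δ * γ = -q := by
    rcases mul_eq_zero.mp hkey with h | h
    · exact eq_neg_of_add_eq_zero_left h
    · exact absurd (by rwa [sub_eq_zero] at h) hq4
  have hγδ : γ * δ = -q := by rw [mul_comm]; exact hδγ
  have hγ0 : γ ≠ 0 := by
    intro hc
    apply hq0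
    rw [hc, zero_mul] at hγδ
    exact neg_eq_zero.mp hγδ.symm
  have hδ0 : δ ≠ 0 := by
    intro hc
    apply hq0
    rw [hc, mul_zero] at hγδ
    exact neg_eq_zero.mp hγδ.symm
  -- u ^ n = 1
  have hun : u ^ n = (1 : k) • (1 : A) := by
    apply hext; intro y
    obtain ⟨i, hi, rfl⟩ := hgsurj y
    rw [map_pow, hu i, one_smul, map_one, ← pow_mul, mul_comm i n, pow_mul, hrn, one_pow]
  -- u generates A
  have hεadj : ∀ x : X, ε x ∈ Algebra.adjoin k ({u} : Set A) := by
    intro x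
    obtain ⟨i, hi, rfl⟩ := hgsurj x
    have hinj' : Set.InjOn (fun j => r ^ j) (Finset.range n) := by
      intro a ha b hb hab
      exact hr.pow_inj (Finset.mem_range.mp ha) (Finset.mem_range.mp hb) hab
    have heval : Polynomial.aeval u (Lagrange.basis (Finset.range n) (fun j => r ^ j) i)
        = ε ((σ ^ i) x₀) := by
      apply hext; intro y
      obtain ⟨j, hj, rfl⟩ := hgsurj y
      have h1 : φ ((σ ^ j) x₀) (Polynomial.aeval u (Lagrange.basis (Finset.range n)
          (fun j => r ^ j) i)) = Polynomial.aeval (φ ((σ ^ j) x₀) u)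
          (Lagrange.basis (Finset.range n) (fun j => r ^ j) i) :=
        (Polynomial.aeval_algHom_apply (φ ((σ ^ j) x₀)) u _).symm
      rw [h1, hu j]
      have h2 : Polynomial.aeval (r ^ j) (Lagrange.basis (Finset.range n) (fun j => r ^ j) i)
          = Polynomial.eval (r ^ j) (Lagrange.basis (Finset.range n) (fun j => r ^ j) i) := by
        rw [Polynomial.coe_aeval_eq_eval]
      rw [h2, hφε]
      by_cases hij : j = i
      · subst hij
        rw [if_pos rfl]
        exact Lagrange.eval_basis_self hinj' (Finset.mem_range.mpr hj)
      · rw [if_neg ?_]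
        · exact Lagrange.eval_basis_of_ne (fun hc => hij hc.symm) (Finset.mem_range.mpr hj)
        · intro hc
          exact hij (hginj j i hj hi hc)
    rw [Algebra.adjoin_singleton_eq_range_aeval, ← heval, AlgHom.mem_range]
    exact ⟨_, rfl⟩
  have hadjoin : Algebra.adjoin k ({u} : Set A) = ⊤ := by
    rw [eq_top_iff]
    intro a _
    rw [hsum a]
    exact Subalgebra.sum_mem _ fun x _ => Subalgebra.smul_mem _ (hεadj x) _
  -- assemble
  refine ⟨u, 1, γ, δ, one_ne_zero, hγ0, hδ0, hadjoin, hun, hκu, hfu, heu, hγδ, ?_⟩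
  intro u' β' γ' δ' _ _ _ _ _ hκu' _ _ _
  have h1 : κ u' = (q ^ 2) ^ 1 • u' := by rwa [pow_one]
  have h2 := EIG 1 u' h1
  rw [pow_one] at h2
  exact ⟨φ x₀ u', h2⟩

/-- Montgomery–Schneider (Corollary 3.2): an `n`-dimensional reduced algebra `A` with a
`u_q(sl₂)`-module-algebra structure `(κ, e, f)` such that `f ≠ 0` or `e ≠ 0` is generated
by an element `u` with `uⁿ = β·1`, `κ(u) = q²·u`, `f(u) = γ·1`, `e(u) = δ·u²`, `γδ = -q`,
and `u` is unique up to scalar multiple. -/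
theorem stmt_15 (k : Type*) [Field k] [IsAlgClosed k] [CharZero k]
    (n : ℕ) (hn : 3 ≤ n) (hodd : Odd n)
    (q : k) (hq : IsPrimitiveRoot q n)
    (A : Type*) [Ring A] [Algebra k A] [IsReduced A]
    [FiniteDimensional k A] (hdim : Module.finrank k A = n)
    (κ : A ≃ₐ[k] A) (e f : A →ₗ[k] A)
    (hκn : κ ^ n = 1)
    (he1 : e 1 = 0) (hf1 : f 1 = 0)
    (heab : ∀ a c : A, e (a * c) = κ a * e c + e a * c)
    (hfab : ∀ a c : A, f (a * c) = a * f c + f a * κ⁻¹ c)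
    (hen : e ^ n = 0) (hfn : f ^ n = 0)
    (hκe : κ.toLinearMap ∘ₗ e = q ^ 2 • (e ∘ₗ κ.toLinearMap))
    (hκf : κ.toLinearMap ∘ₗ f = (q⁻¹) ^ 2 • (f ∘ₗ κ.toLinearMap))
    (hef : (q - q⁻¹) • (e ∘ₗ f - f ∘ₗ e) =
      κ.toLinearMap - (κ⁻¹ : A ≃ₐ[k] A).toLinearMap)
    (hne : f ≠ 0 ∨ e ≠ 0) :
    ∃ (u : A) (β γ δ : k), β ≠ 0 ∧ γ ≠ 0 ∧ δ ≠ 0 ∧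
      Algebra.adjoin k {u} = ⊤ ∧ u ^ n = β • (1 : A) ∧
      κ u = q ^ 2 • u ∧ f u = γ • (1 : A) ∧ e u = δ • u ^ 2 ∧ γ * δ = -q ∧
      (∀ (u' : A) (β' γ' δ' : k), β' ≠ 0 → γ' ≠ 0 → δ' ≠ 0 →
        Algebra.adjoin k {u'} = ⊤ → u' ^ n = β' • (1 : A) →
        κ u' = q ^ 2 • u' → f u' = γ' • (1 : A) → e u' = δ' • u' ^ 2 →
        γ' * δ' = -q → ∃ c : k, u' = c • u) := by
  letI : CommRing A := { ‹Ring A› with mul_comm := fun a b => MS.comm (k := k) a b }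
  exact MS.main k n hn hodd q hq A hdim κ e f hκn he1 hf1 heab hfab hκe hκf hef hne
end
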